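/- Let m ≥ 1, let A be an invertible real m×m matrix, and let Z : ℕ → Matrix (Fin m) (Fin m) ℝ satisfy Z (j+1) = Φ(A, Z j) for all j, where Φ(A, Z) = (1/4 : ℝ) • (Z * (13 • I - A * Z * (15 • I - A * Z * (7 • I - A * Z)))). If r = ‖I - A * Z 0‖ < 1 in the L2 operator norm, then for every j, ‖Z j - A⁻¹‖ ≤ ‖A⁻¹‖ * r^(3^j). -/

import Mathlib

open scoped Matrix.Norms.L2Operator

/-- One step `Φ(A, Z) = ¼ • (Z * (13•I - A*Z * (15•I - A*Z * (7•I - A*Z))))` of the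
hyperpower iteration of the paper's Lemma 1. -/
noncomputable def hyperpowerStep {m : ℕ} (A Z : Matrix (Fin m) (Fin m) ℝ) :
    Matrix (Fin m) (Fin m) ℝ :=
  (1 / 4 : ℝ) • (Z * ((13 : ℝ) • (1 : Matrix (Fin m) (Fin m) ℝ) -
    A * Z * ((15 : ℝ) • (1 : Matrix (Fin m) (Fin m) ℝ) -
      A * Z * ((7 : ℝ) • (1 : Matrix (Fin m) (Fin m) ℝ) - A * Z))))

/-- Algebraic identity: one hyperpower step cubes the residual, up to the factor
`(3•I + E)/4`. -/
lemma hyperpower_residual {m : ℕ} (A Z : Matrix (Fin m) (Fin m) ℝ) :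
    (1 : Matrix (Fin m) (Fin m) ℝ) - A * hyperpowerStep A Z =
      (1/4 : ℝ) • (((1 : Matrix (Fin m) (Fin m) ℝ) - A*Z)^3 *
        ((3:ℝ) • (1 : Matrix (Fin m) (Fin m) ℝ) + ((1 : Matrix (Fin m) (Fin m) ℝ) - A*Z))) := by
  unfold hyperpowerStep
  rw [mul_smul_comm, ← mul_assoc]
  obtain ⟨X, hX⟩ : ∃ X, A * Z = X := ⟨_, rfl⟩
  rw [hX]
  have h4 : (4 : ℝ) • ((1 : Matrix (Fin m) (Fin m) ℝ) - (1/4:ℝ) • (X * ((13 : ℝ) • 1 - X * ((15 : ℝ) • 1 - X * ((7 : ℝ) • 1 - X))))) =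
      (4:ℝ) • ((1/4 : ℝ) • (((1 : Matrix (Fin m) (Fin m) ℝ) - X)^3 * ((3:ℝ) • (1 : Matrix (Fin m) (Fin m) ℝ) + (1 - X)))) := by
    simp only [smul_smul, smul_sub, smul_add, mul_smul_comm, smul_mul_assoc]
    norm_num
    noncomm_ring
    match_scalars <;> norm_num
  exact smul_right_injective (Matrix (Fin m) (Fin m) ℝ) (by norm_num : (4:ℝ) ≠ 0) h4

set_option maxHeartbeats 1000000 in
/-- Explicit error bound for the hyperpower approximation of `A⁻¹`: if `A` is
invertible and `r = ‖I - A * Z 0‖ < 1`, then `‖Z j - A⁻¹‖ ≤ ‖A⁻¹‖ * r ^ (3 ^ j)`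
for every `j`. -/
theorem norm_hyperpower_sub_inv_le {m : ℕ} (hm : 1 ≤ m)
    (A : Matrix (Fin m) (Fin m) ℝ) [Invertible A]
    (Z : ℕ → Matrix (Fin m) (Fin m) ℝ)
    (hZ : ∀ j, Z (j + 1) = hyperpowerStep A (Z j))
    (h0 : ‖(1 : Matrix (Fin m) (Fin m) ℝ) - A * Z 0‖ < 1) :
    ∀ j, ‖Z j - A⁻¹‖ ≤ ‖A⁻¹‖ * ‖(1 : Matrix (Fin m) (Fin m) ℝ) - A * Z 0‖ ^ (3 ^ j) := by
  set r : ℝ := ‖(1 : Matrix (Fin m) (Fin m) ℝ) - A * Z 0‖ with hr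
  have hr0 : 0 ≤ r := norm_nonneg _
  have hone : ‖(1 : Matrix (Fin m) (Fin m) ℝ)‖ ≤ 1 := by
    haveI : Nontrivial (EuclideanSpace ℝ (Fin m)) := by
      have : Nonempty (Fin m) := ⟨⟨0, hm⟩⟩
      infer_instance
    rw [Matrix.cstar_norm_def, map_one]
    exact norm_one.le
  -- main induction: ‖E j‖ ≤ r ^ (3 ^ j)
  have key : ∀ j, ‖(1 : Matrix (Fin m) (Fin m) ℝ) - A * Z j‖ ≤ r ^ (3 ^ j) := by
    intro j
    induction j with
    | zero => simp [hr]
    | succ j ih =>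
      set E : Matrix (Fin m) (Fin m) ℝ := 1 - A * Z j with hE
      have hEr : ‖E‖ ≤ 1 := by
        refine ih.trans ?_
        exact pow_le_one₀ hr0 h0.le
      have hstep : (1 : Matrix (Fin m) (Fin m) ℝ) - A * Z (j+1) =
          (1/4 : ℝ) • (E^3 * ((3:ℝ) • (1 : Matrix (Fin m) (Fin m) ℝ) + E)) := by
        rw [hZ j, hyperpower_residual]
      rw [hstep]
      have h1 : ‖E^3 * ((3:ℝ) • (1 : Matrix (Fin m) (Fin m) ℝ) + E)‖ ≤
          ‖E‖^3 * 4 := by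
        calc ‖E^3 * ((3:ℝ) • (1 : Matrix (Fin m) (Fin m) ℝ) + E)‖
            ≤ ‖E^3‖ * ‖(3:ℝ) • (1 : Matrix (Fin m) (Fin m) ℝ) + E‖ := norm_mul_le _ _
          _ ≤ ‖E‖^3 * 4 := by
              refine mul_le_mul (norm_pow_le' E (by norm_num)) ?_ (norm_nonneg _)
                (by positivity)
              have h3 : ‖(3:ℝ) • (1 : Matrix (Fin m) (Fin m) ℝ)‖ ≤ 3 := by
                rw [norm_smul]
                have : ‖(3:ℝ)‖ = 3 := by simp
                nlinarith [hone, norm_nonneg (1 : Matrix (Fin m) (Fin m) ℝ)]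
              have h4 := norm_add_le ((3:ℝ) • (1 : Matrix (Fin m) (Fin m) ℝ)) E
              linarith
      calc ‖(1/4 : ℝ) • (E^3 * ((3:ℝ) • (1 : Matrix (Fin m) (Fin m) ℝ) + E))‖
          = (1/4) * ‖E^3 * ((3:ℝ) • (1 : Matrix (Fin m) (Fin m) ℝ) + E)‖ := by
            rw [norm_smul]; norm_num
        _ ≤ (1/4) * (‖E‖^3 * 4) := by gcongr
        _ = ‖E‖^3 := by ring
        _ ≤ (r ^ (3 ^ j))^3 := by gcongr
        _ = r ^ (3 ^ (j+1)) := by rw [← pow_mul, pow_succ]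
  intro j
  have hid : Z j - A⁻¹ = -(A⁻¹ * ((1 : Matrix (Fin m) (Fin m) ℝ) - A * Z j)) := by
    rw [mul_sub, mul_one, ← mul_assoc, Matrix.inv_mul_of_invertible, one_mul]
    simp
  rw [hid, norm_neg]
  calc ‖A⁻¹ * ((1 : Matrix (Fin m) (Fin m) ℝ) - A * Z j)‖
      ≤ ‖A⁻¹‖ * ‖(1 : Matrix (Fin m) (Fin m) ℝ) - A * Z j‖ := norm_mul_le _ _
    _ ≤ ‖A⁻¹‖ * r ^ (3 ^ j) := by gcongr; exact key j
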